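/- For a graph G of order n, α'(G) = 5/2 if and only if one of the following holds: (1) C₅ ∪ (n−5)K₁ ⊆ G ⊆ K₅ ∪ (n−5)K₁; (2) C₃ ∪ K₂ ∪ (n−5)K₁ ⊆ G ⊆ K₅ ∪ (n−5)K₁; (3) C₃ ∪ K₂ ∪ (n−5)K₁ ⊆ G ⊆ H, where H is the graph of order n obtained by attaching n−4 pendant edges at one vertex of K₄. -/

import Mathlib

open Finset
open scoped Classical

noncomputable section

/-- A fractional matching of a simple graph `G`: a weight on `Sym2 V` supported on the
edge set, with values in `[0,1]`, such that the total weight at each vertex is at most 1. -/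
def SimpleGraph.IsFracMatching {V : Type*} [Fintype V] (G : SimpleGraph V)
    (f : Sym2 V → ℝ) : Prop :=
  (∀ e, 0 ≤ f e ∧ f e ≤ 1) ∧ (∀ e, e ∉ G.edgeSet → f e = 0) ∧
    ∀ v : V, ∑ e ∈ G.incidenceFinset v, f e ≤ 1

/-- The total weight `f(G)` of a fractional matching. -/
def SimpleGraph.fracWeight {V : Type*} [Fintype V] (G : SimpleGraph V)
    (f : Sym2 V → ℝ) : ℝ :=
  ∑ e ∈ G.edgeFinset, f e

/-- The weight `f(v)` of a vertex: the sum over edges incident to `v`. -/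
def SimpleGraph.vertexWeight {V : Type*} [Fintype V] (G : SimpleGraph V)
    (f : Sym2 V → ℝ) (v : V) : ℝ :=
  ∑ e ∈ G.incidenceFinset v, f e

/-- The fractional matching number `α'(G)`. -/
def SimpleGraph.fracNu {V : Type*} [Fintype V] (G : SimpleGraph V) : ℝ :=
  sSup {x : ℝ | ∃ f, G.IsFracMatching f ∧ G.fracWeight f = x}

end

set_option linter.unusedSectionVars false

section AuxProofs
variable {V : Type*} [Fintype V] {G : SimpleGraph V}


lemma duality' {f : Sym2 V → ℝ} (hf : G.IsFracMatching f) (w : V → ℝ) (hw0 : ∀ v, 0 ≤ w v)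
    (hwc : ∀ x y, G.Adj x y → 1 ≤ w x + w y) : G.fracWeight f ≤ ∑ v, w v := by
  obtain ⟨hb, hsupp, hvert⟩ := hf
  have swap : ∑ e ∈ G.edgeFinset, (∑ v ∈ univ.filter (· ∈ e), w v) * f e
      = ∑ v : V, w v * ∑ e ∈ G.incidenceFinset v, f e := by
    simp_rw [Finset.sum_filter, Finset.sum_mul]
    rw [Finset.sum_comm]
    refine Finset.sum_congr rfl fun v _ => ?_
    rw [SimpleGraph.incidenceFinset_eq_filter, Finset.sum_filter, Finset.mul_sum]
    refine Finset.sum_congr rfl fun e _ => ?_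
    split <;> simp
  calc G.fracWeight f = ∑ e ∈ G.edgeFinset, f e := rfl
    _ ≤ ∑ e ∈ G.edgeFinset, (∑ v ∈ univ.filter (· ∈ e), w v) * f e := by
        refine Finset.sum_le_sum fun e he => ?_
        refine le_mul_of_one_le_left (hb e).1 ?_
        rw [SimpleGraph.mem_edgeFinset] at he
        induction e with
        | h x y =>
          have hadj : G.Adj x y := he
          have hxy : x ≠ y := hadj.ne
          have : univ.filter (· ∈ s(x, y)) = {x, y} := by
            ext v; simp [Sym2.mem_iff]
          rw [this, Finset.sum_pair hxy]
          exact hwc x y hadj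
    _ = ∑ v : V, w v * ∑ e ∈ G.incidenceFinset v, f e := swap
    _ ≤ ∑ v : V, w v * 1 := by
        exact Finset.sum_le_sum fun v _ => mul_le_mul_of_nonneg_left (hvert v) (hw0 v)
    _ = ∑ v, w v := by simp
lemma nuNonempty' : {x : ℝ | ∃ f, G.IsFracMatching f ∧ G.fracWeight f = x}.Nonempty := by
  refine ⟨0, (fun _ => 0), ⟨fun e => by norm_num, fun e _ => rfl, fun v => by simp⟩, by simp [SimpleGraph.fracWeight]⟩

lemma nuBdd' : BddAbove {x : ℝ | ∃ f, G.IsFracMatching f ∧ G.fracWeight f = x} := by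
  refine ⟨(Fintype.card V : ℝ), fun x hx => ?_⟩
  obtain ⟨f, hf, rfl⟩ := hx
  have := duality' hf (fun _ => 1) (fun v => by norm_num) (fun x y _ => by norm_num)
  simpa using this



lemma matching_of' (S T : Finset (Sym2 V)) (hS : ∀ e ∈ S, e ∈ G.edgeSet)
    (hT : ∀ e ∈ T, e ∈ G.edgeSet) (hdisj : ∀ e, ¬(e ∈ S ∧ e ∈ T))
    (hd : ∀ v : V, (S.filter (fun e => v ∈ e)).card + 2 * (T.filter (fun e => v ∈ e)).card ≤ 2) :
    ∃ f, G.IsFracMatching f ∧ G.fracWeight f = (S.card : ℝ) / 2 + T.card := by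
  set f : Sym2 V → ℝ := fun e => if e ∈ T then 1 else if e ∈ S then 1/2 else 0 with hfdef
  have pointwise : ∀ e, f e = (if e ∈ T then (1:ℝ) else 0) + (if e ∈ S then (1/2:ℝ) else 0) := by
    intro e; rw [hfdef]; dsimp only
    by_cases h1 : e ∈ T
    · rw [if_pos h1, if_pos h1, if_neg (fun h2 => hdisj e ⟨h2, h1⟩)]; ring
    · rw [if_neg h1, if_neg h1, zero_add]
  have sumf : ∀ U : Finset (Sym2 V), ∑ e ∈ U, f e
      = ((U.filter (fun e => e ∈ T)).card : ℝ) * 1 + ((U.filter (fun e => e ∈ S)).card : ℝ) * (1/2) := by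
    intro U
    rw [Finset.sum_congr rfl (fun e _ => pointwise e), Finset.sum_add_distrib,
      ← Finset.sum_filter, ← Finset.sum_filter, Finset.sum_const, Finset.sum_const]
    simp [nsmul_eq_mul]
  have hSE : ∀ e ∈ S, e ∈ G.edgeFinset := fun e he => SimpleGraph.mem_edgeFinset.2 (hS e he)
  have hTE : ∀ e ∈ T, e ∈ G.edgeFinset := fun e he => SimpleGraph.mem_edgeFinset.2 (hT e he)
  refine ⟨f, ⟨fun e => ?_, fun e he => ?_, fun v => ?_⟩, ?_⟩
  · rw [hfdef]; dsimp only; split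
    · norm_num
    · split <;> norm_num
  · rw [hfdef]; dsimp only
    rw [if_neg (fun h => he (hT e h)), if_neg (fun h => he (hS e h))]
  · rw [sumf]
    have h1 : (G.incidenceFinset v).filter (fun e => e ∈ T) = T.filter (fun e => v ∈ e) := by
      ext e
      rw [Finset.mem_filter, Finset.mem_filter, SimpleGraph.mem_incidenceFinset]
      constructor
      · rintro ⟨h1, h2⟩; exact ⟨h2, h1.2⟩
      · rintro ⟨h2, h1⟩; exact ⟨⟨hT e h2, h1⟩, h2⟩
    have h2 : (G.incidenceFinset v).filter (fun e => e ∈ S) = S.filter (fun e => v ∈ e) := by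
      ext e
      rw [Finset.mem_filter, Finset.mem_filter, SimpleGraph.mem_incidenceFinset]
      constructor
      · rintro ⟨h1, h2⟩; exact ⟨h2, h1.2⟩
      · rintro ⟨h2, h1⟩; exact ⟨⟨hS e h2, h1⟩, h2⟩
    rw [h1, h2]
    have hc1 : ((S.filter (fun e => v ∈ e)).card : ℝ) + 2 * ((T.filter (fun e => v ∈ e)).card : ℝ) ≤ 2 := by
      exact_mod_cast hd v
    linarith
  · rw [SimpleGraph.fracWeight, sumf]
    have h1 : G.edgeFinset.filter (fun e => e ∈ T) = T := by
      ext e; rw [Finset.mem_filter]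
      exact ⟨fun h => h.2, fun h => ⟨hTE e h, h⟩⟩
    have h2 : G.edgeFinset.filter (fun e => e ∈ S) = S := by
      ext e; rw [Finset.mem_filter]
      exact ⟨fun h => h.2, fun h => ⟨hSE e h, h⟩⟩
    rw [h1, h2]; ring

lemma frac_lb (S T : Finset (Sym2 V)) (hS : ∀ e ∈ S, e ∈ G.edgeSet)
    (hT : ∀ e ∈ T, e ∈ G.edgeSet) (hdisj : ∀ e, ¬(e ∈ S ∧ e ∈ T))
    (hd : ∀ v : V, (S.filter (fun e => v ∈ e)).card + 2 * (T.filter (fun e => v ∈ e)).card ≤ 2) :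
    (S.card : ℝ) / 2 + T.card ≤ G.fracNu := by
  obtain ⟨f, hf, hw⟩ := matching_of' S T hS hT hdisj hd
  rw [← hw]
  exact le_csSup nuBdd' ⟨f, hf, rfl⟩

lemma no3M_aux (h52 : G.fracNu = 5/2) {a b c d x y : V}
    (e1 : G.Adj a b) (e2 : G.Adj c d) (e3 : G.Adj x y)
    (hab : a ≠ b) (hac : a ≠ c) (had : a ≠ d) (hax : a ≠ x) (hay : a ≠ y) (hbc : b ≠ c) (hbd : b ≠ d) (hbx : b ≠ x) (hby : b ≠ y) (hcd : c ≠ d) (hcx : c ≠ x) (hcy : c ≠ y) (hdx : d ≠ x) (hdy : d ≠ y) (hxy : x ≠ y) : False := by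
  have hlb := frac_lb (G := G) ∅ {s(a,b), s(c,d), s(x,y)}
    (by simp)
    (by intro e' he'
        simp only [Finset.mem_insert, Finset.mem_singleton] at he'
        rcases he' with rfl | rfl | rfl
        exacts [e1, e2, e3])
    (by simp)
    (by intro v
        by_cases hva : v = a
        · subst hva
          simp [Finset.filter_insert, Finset.filter_singleton, Sym2.mem_iff, Sym2.eq_iff, hab, hab.symm, hac, hac.symm, had, had.symm, hax, hax.symm, hay, hay.symm, hbc, hbc.symm, hbd, hbd.symm, hbx, hbx.symm, hby, hby.symm, hcd, hcd.symm, hcx, hcx.symm, hcy, hcy.symm, hdx, hdx.symm, hdy, hdy.symm, hxy, hxy.symm]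
        by_cases hvb : v = b
        · subst hvb
          simp [Finset.filter_insert, Finset.filter_singleton, Sym2.mem_iff, Sym2.eq_iff, hab, hab.symm, hac, hac.symm, had, had.symm, hax, hax.symm, hay, hay.symm, hbc, hbc.symm, hbd, hbd.symm, hbx, hbx.symm, hby, hby.symm, hcd, hcd.symm, hcx, hcx.symm, hcy, hcy.symm, hdx, hdx.symm, hdy, hdy.symm, hxy, hxy.symm]
        by_cases hvc : v = c
        · subst hvc
          simp [Finset.filter_insert, Finset.filter_singleton, Sym2.mem_iff, Sym2.eq_iff, hab, hab.symm, hac, hac.symm, had, had.symm, hax, hax.symm, hay, hay.symm, hbc, hbc.symm, hbd, hbd.symm, hbx, hbx.symm, hby, hby.symm, hcd, hcd.symm, hcx, hcx.symm, hcy, hcy.symm, hdx, hdx.symm, hdy, hdy.symm, hxy, hxy.symm]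
        by_cases hvd : v = d
        · subst hvd
          simp [Finset.filter_insert, Finset.filter_singleton, Sym2.mem_iff, Sym2.eq_iff, hab, hab.symm, hac, hac.symm, had, had.symm, hax, hax.symm, hay, hay.symm, hbc, hbc.symm, hbd, hbd.symm, hbx, hbx.symm, hby, hby.symm, hcd, hcd.symm, hcx, hcx.symm, hcy, hcy.symm, hdx, hdx.symm, hdy, hdy.symm, hxy, hxy.symm]
        by_cases hvx : v = x
        · subst hvx
          simp [Finset.filter_insert, Finset.filter_singleton, Sym2.mem_iff, Sym2.eq_iff, hab, hab.symm, hac, hac.symm, had, had.symm, hax, hax.symm, hay, hay.symm, hbc, hbc.symm, hbd, hbd.symm, hbx, hbx.symm, hby, hby.symm, hcd, hcd.symm, hcx, hcx.symm, hcy, hcy.symm, hdx, hdx.symm, hdy, hdy.symm, hxy, hxy.symm]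
        by_cases hvy : v = y
        · subst hvy
          simp [Finset.filter_insert, Finset.filter_singleton, Sym2.mem_iff, Sym2.eq_iff, hab, hab.symm, hac, hac.symm, had, had.symm, hax, hax.symm, hay, hay.symm, hbc, hbc.symm, hbd, hbd.symm, hbx, hbx.symm, hby, hby.symm, hcd, hcd.symm, hcx, hcx.symm, hcy, hcy.symm, hdx, hdx.symm, hdy, hdy.symm, hxy, hxy.symm]
        · simp [Finset.filter_insert, Finset.filter_singleton, Sym2.mem_iff, Sym2.eq_iff, hva, hvb, hvc, hvd, hvx, hvy])
  have hcard : ({s(a,b), s(c,d), s(x,y)} : Finset (Sym2 V)).card = 3 := by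
    rw [Finset.card_insert_of_notMem (by simp [Sym2.eq_iff]; tauto),
      Finset.card_insert_of_notMem (by simp [Sym2.eq_iff]; tauto), Finset.card_singleton]
  rw [hcard] at hlb
  rw [h52] at hlb
  norm_num at hlb

lemma no2T_aux (h52 : G.fracNu = 5/2) {a b c x y z : V}
    (e1 : G.Adj a b) (e2 : G.Adj b c) (e3 : G.Adj a c)
    (e4 : G.Adj x y) (e5 : G.Adj y z) (e6 : G.Adj x z)
    (hab : a ≠ b) (hac : a ≠ c) (hbc : b ≠ c) (hax : a ≠ x) (hay : a ≠ y) (haz : a ≠ z) (hbx : b ≠ x) (hby : b ≠ y) (hbz : b ≠ z) (hcx : c ≠ x) (hcy : c ≠ y) (hcz : c ≠ z) (hxy : x ≠ y) (hxz : x ≠ z) (hyz : y ≠ z) : False := by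
  have hlb := frac_lb (G := G) {s(a,b), s(b,c), s(a,c), s(x,y), s(y,z), s(x,z)} ∅
    (by intro e' he'
        simp only [Finset.mem_insert, Finset.mem_singleton] at he'
        rcases he' with rfl | rfl | rfl | rfl | rfl | rfl
        exacts [e1, e2, e3, e4, e5, e6])
    (by simp)
    (by simp)
    (by intro v
        by_cases hva : v = a
        · subst hva
          simp [Finset.filter_insert, Finset.filter_singleton, Sym2.mem_iff, Sym2.eq_iff, hab, hab.symm, hac, hac.symm, hbc, hbc.symm, hax, hax.symm, hay, hay.symm, haz, haz.symm, hbx, hbx.symm, hby, hby.symm, hbz, hbz.symm, hcx, hcx.symm, hcy, hcy.symm, hcz, hcz.symm, hxy, hxy.symm, hxz, hxz.symm, hyz, hyz.symm]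
        by_cases hvb : v = b
        · subst hvb
          simp [Finset.filter_insert, Finset.filter_singleton, Sym2.mem_iff, Sym2.eq_iff, hab, hab.symm, hac, hac.symm, hbc, hbc.symm, hax, hax.symm, hay, hay.symm, haz, haz.symm, hbx, hbx.symm, hby, hby.symm, hbz, hbz.symm, hcx, hcx.symm, hcy, hcy.symm, hcz, hcz.symm, hxy, hxy.symm, hxz, hxz.symm, hyz, hyz.symm]
        by_cases hvc : v = c
        · subst hvc
          simp [Finset.filter_insert, Finset.filter_singleton, Sym2.mem_iff, Sym2.eq_iff, hab, hab.symm, hac, hac.symm, hbc, hbc.symm, hax, hax.symm, hay, hay.symm, haz, haz.symm, hbx, hbx.symm, hby, hby.symm, hbz, hbz.symm, hcx, hcx.symm, hcy, hcy.symm, hcz, hcz.symm, hxy, hxy.symm, hxz, hxz.symm, hyz, hyz.symm]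
        by_cases hvx : v = x
        · subst hvx
          simp [Finset.filter_insert, Finset.filter_singleton, Sym2.mem_iff, Sym2.eq_iff, hab, hab.symm, hac, hac.symm, hbc, hbc.symm, hax, hax.symm, hay, hay.symm, haz, haz.symm, hbx, hbx.symm, hby, hby.symm, hbz, hbz.symm, hcx, hcx.symm, hcy, hcy.symm, hcz, hcz.symm, hxy, hxy.symm, hxz, hxz.symm, hyz, hyz.symm]
        by_cases hvy : v = y
        · subst hvy
          simp [Finset.filter_insert, Finset.filter_singleton, Sym2.mem_iff, Sym2.eq_iff, hab, hab.symm, hac, hac.symm, hbc, hbc.symm, hax, hax.symm, hay, hay.symm, haz, haz.symm, hbx, hbx.symm, hby, hby.symm, hbz, hbz.symm, hcx, hcx.symm, hcy, hcy.symm, hcz, hcz.symm, hxy, hxy.symm, hxz, hxz.symm, hyz, hyz.symm]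
        by_cases hvz : v = z
        · subst hvz
          simp [Finset.filter_insert, Finset.filter_singleton, Sym2.mem_iff, Sym2.eq_iff, hab, hab.symm, hac, hac.symm, hbc, hbc.symm, hax, hax.symm, hay, hay.symm, haz, haz.symm, hbx, hbx.symm, hby, hby.symm, hbz, hbz.symm, hcx, hcx.symm, hcy, hcy.symm, hcz, hcz.symm, hxy, hxy.symm, hxz, hxz.symm, hyz, hyz.symm]
        · simp [Finset.filter_insert, Finset.filter_singleton, Sym2.mem_iff, Sym2.eq_iff, hva, hvb, hvc, hvx, hvy, hvz])
  have hcard : ({s(a,b), s(b,c), s(a,c), s(x,y), s(y,z), s(x,z)} : Finset (Sym2 V)).card = 6 := by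
    rw [Finset.card_insert_of_notMem (by simp [Sym2.eq_iff]; tauto),
      Finset.card_insert_of_notMem (by simp [Sym2.eq_iff]; tauto),
      Finset.card_insert_of_notMem (by simp [Sym2.eq_iff]; tauto),
      Finset.card_insert_of_notMem (by simp [Sym2.eq_iff]; tauto),
      Finset.card_insert_of_notMem (by simp [Sym2.eq_iff]; tauto), Finset.card_singleton]
  rw [hcard] at hlb
  rw [h52] at hlb
  norm_num at hlb

lemma lb_C5 {a b c d e : V}
    (e1 : G.Adj a b) (e2 : G.Adj b c) (e3 : G.Adj c d) (e4 : G.Adj d e) (e5 : G.Adj e a)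
    (hab : a ≠ b) (hac : a ≠ c) (had : a ≠ d) (hae : a ≠ e) (hbc : b ≠ c) (hbd : b ≠ d) (hbe : b ≠ e) (hcd : c ≠ d) (hce : c ≠ e) (hde : d ≠ e) : (5/2 : ℝ) ≤ G.fracNu := by
  have hlb := frac_lb (G := G) {s(a,b), s(b,c), s(c,d), s(d,e), s(e,a)} ∅
    (by intro e' he'
        simp only [Finset.mem_insert, Finset.mem_singleton] at he'
        rcases he' with rfl | rfl | rfl | rfl | rfl
        exacts [e1, e2, e3, e4, e5])
    (by simp)
    (by simp)
    (by intro v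
        by_cases hva : v = a
        · subst hva
          simp [Finset.filter_insert, Finset.filter_singleton, Sym2.mem_iff, Sym2.eq_iff, hab, hab.symm, hac, hac.symm, had, had.symm, hae, hae.symm, hbc, hbc.symm, hbd, hbd.symm, hbe, hbe.symm, hcd, hcd.symm, hce, hce.symm, hde, hde.symm]
        by_cases hvb : v = b
        · subst hvb
          simp [Finset.filter_insert, Finset.filter_singleton, Sym2.mem_iff, Sym2.eq_iff, hab, hab.symm, hac, hac.symm, had, had.symm, hae, hae.symm, hbc, hbc.symm, hbd, hbd.symm, hbe, hbe.symm, hcd, hcd.symm, hce, hce.symm, hde, hde.symm]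
        by_cases hvc : v = c
        · subst hvc
          simp [Finset.filter_insert, Finset.filter_singleton, Sym2.mem_iff, Sym2.eq_iff, hab, hab.symm, hac, hac.symm, had, had.symm, hae, hae.symm, hbc, hbc.symm, hbd, hbd.symm, hbe, hbe.symm, hcd, hcd.symm, hce, hce.symm, hde, hde.symm]
        by_cases hvd : v = d
        · subst hvd
          simp [Finset.filter_insert, Finset.filter_singleton, Sym2.mem_iff, Sym2.eq_iff, hab, hab.symm, hac, hac.symm, had, had.symm, hae, hae.symm, hbc, hbc.symm, hbd, hbd.symm, hbe, hbe.symm, hcd, hcd.symm, hce, hce.symm, hde, hde.symm]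
        by_cases hve : v = e
        · subst hve
          simp [Finset.filter_insert, Finset.filter_singleton, Sym2.mem_iff, Sym2.eq_iff, hab, hab.symm, hac, hac.symm, had, had.symm, hae, hae.symm, hbc, hbc.symm, hbd, hbd.symm, hbe, hbe.symm, hcd, hcd.symm, hce, hce.symm, hde, hde.symm]
        · simp [Finset.filter_insert, Finset.filter_singleton, Sym2.mem_iff, Sym2.eq_iff, hva, hvb, hvc, hvd, hve])
  have hcard : ({s(a,b), s(b,c), s(c,d), s(d,e), s(e,a)} : Finset (Sym2 V)).card = 5 := by
    rw [Finset.card_insert_of_notMem (by simp [Sym2.eq_iff]; tauto),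
      Finset.card_insert_of_notMem (by simp [Sym2.eq_iff]; tauto),
      Finset.card_insert_of_notMem (by simp [Sym2.eq_iff]; tauto),
      Finset.card_insert_of_notMem (by simp [Sym2.eq_iff]; tauto), Finset.card_singleton]
  rw [hcard] at hlb
  norm_num at hlb
  linarith

lemma lb_C3K2 {p q r d e : V}
    (e1 : G.Adj p q) (e2 : G.Adj q r) (e3 : G.Adj p r) (e4 : G.Adj d e)
    (hpq : p ≠ q) (hpr : p ≠ r) (hpd : p ≠ d) (hpe : p ≠ e) (hqr : q ≠ r) (hqd : q ≠ d) (hqe : q ≠ e) (hrd : r ≠ d) (hre : r ≠ e) (hde : d ≠ e) : (5/2 : ℝ) ≤ G.fracNu := by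
  have hlb := frac_lb (G := G) {s(p,q), s(q,r), s(p,r)} {s(d,e)}
    (by intro e' he'
        simp only [Finset.mem_insert, Finset.mem_singleton] at he'
        rcases he' with rfl | rfl | rfl
        exacts [e1, e2, e3])
    (by intro e' he'
        simp only [Finset.mem_singleton] at he'
        subst he'; exact e4)
    (by intro e'
        rintro ⟨hS, hT⟩
        simp only [Finset.mem_insert, Finset.mem_singleton] at hS hT
        subst hT
        rcases hS with h | h | h <;> rw [Sym2.eq_iff] at h <;> tauto)
    (by intro v
        by_cases hvp : v = p
        · subst hvp
          simp [Finset.filter_insert, Finset.filter_singleton, Sym2.mem_iff, Sym2.eq_iff, hpq, hpq.symm, hpr, hpr.symm, hpd, hpd.symm, hpe, hpe.symm, hqr, hqr.symm, hqd, hqd.symm, hqe, hqe.symm, hrd, hrd.symm, hre, hre.symm, hde, hde.symm]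
        by_cases hvq : v = q
        · subst hvq
          simp [Finset.filter_insert, Finset.filter_singleton, Sym2.mem_iff, Sym2.eq_iff, hpq, hpq.symm, hpr, hpr.symm, hpd, hpd.symm, hpe, hpe.symm, hqr, hqr.symm, hqd, hqd.symm, hqe, hqe.symm, hrd, hrd.symm, hre, hre.symm, hde, hde.symm]
        by_cases hvr : v = r
        · subst hvr
          simp [Finset.filter_insert, Finset.filter_singleton, Sym2.mem_iff, Sym2.eq_iff, hpq, hpq.symm, hpr, hpr.symm, hpd, hpd.symm, hpe, hpe.symm, hqr, hqr.symm, hqd, hqd.symm, hqe, hqe.symm, hrd, hrd.symm, hre, hre.symm, hde, hde.symm]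
        by_cases hvd : v = d
        · subst hvd
          simp [Finset.filter_insert, Finset.filter_singleton, Sym2.mem_iff, Sym2.eq_iff, hpq, hpq.symm, hpr, hpr.symm, hpd, hpd.symm, hpe, hpe.symm, hqr, hqr.symm, hqd, hqd.symm, hqe, hqe.symm, hrd, hrd.symm, hre, hre.symm, hde, hde.symm]
        by_cases hve : v = e
        · subst hve
          simp [Finset.filter_insert, Finset.filter_singleton, Sym2.mem_iff, Sym2.eq_iff, hpq, hpq.symm, hpr, hpr.symm, hpd, hpd.symm, hpe, hpe.symm, hqr, hqr.symm, hqd, hqd.symm, hqe, hqe.symm, hrd, hrd.symm, hre, hre.symm, hde, hde.symm]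
        · simp [Finset.filter_insert, Finset.filter_singleton, Sym2.mem_iff, Sym2.eq_iff, hvp, hvq, hvr, hvd, hve])
  have hcard : ({s(p,q), s(q,r), s(p,r)} : Finset (Sym2 V)).card = 3 := by
    rw [Finset.card_insert_of_notMem (by simp [Sym2.eq_iff]; tauto),
      Finset.card_insert_of_notMem (by simp [Sym2.eq_iff]; tauto), Finset.card_singleton]
  rw [hcard, Finset.card_singleton] at hlb
  norm_num at hlb
  linarith
lemma nu_le_of_cover (w : V → ℝ) (hw0 : ∀ v, 0 ≤ w v)
    (hwc : ∀ x y, G.Adj x y → 1 ≤ w x + w y) : G.fracNu ≤ ∑ v, w v := by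
  refine csSup_le nuNonempty' ?_
  rintro x ⟨f, hf, rfl⟩
  exact duality' hf w hw0 hwc

lemma sum_indicator (A : Finset V) (c : ℝ) :
    ∑ v, (if v ∈ A then c else 0) = (A.card : ℝ) * c := by
  rw [← Finset.sum_filter, Finset.filter_univ_mem, Finset.sum_const, nsmul_eq_mul]

lemma nu_le_cover2 (A B : Finset V)
    (hcov : ∀ x y, G.Adj x y → (x ∈ A ∨ y ∈ A) ∨ (x ∈ B ∧ y ∈ B)) :
    G.fracNu ≤ (A.card : ℝ) + (B.card : ℝ)/2 := by
  have h := nu_le_of_cover (G := G)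
    (fun z => (if z ∈ A then (1:ℝ) else 0) + (if z ∈ B then (1/2 : ℝ) else 0))
    (fun v => by positivity)
    (fun x y hxy => by
      rcases hcov x y hxy with (hx | hy) | ⟨hx, hy⟩
      · rw [if_pos hx]; have : (0:ℝ) ≤ (if x ∈ B then (1/2:ℝ) else 0) := by positivity
        have h2 : (0:ℝ) ≤ (if y ∈ A then (1:ℝ) else 0) + (if y ∈ B then (1/2:ℝ) else 0) := by positivity
        linarith
      · rw [if_pos hy]; have : (0:ℝ) ≤ (if y ∈ B then (1/2:ℝ) else 0) := by positivity
        have h2 : (0:ℝ) ≤ (if x ∈ A then (1:ℝ) else 0) + (if x ∈ B then (1/2:ℝ) else 0) := by positivity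
        linarith
      · rw [if_pos hx, if_pos hy]
        have : (0:ℝ) ≤ (if x ∈ A then (1:ℝ) else 0) := by positivity
        have h2 : (0:ℝ) ≤ (if y ∈ A then (1:ℝ) else 0) := by positivity
        linarith)
  rw [Finset.sum_add_distrib, sum_indicator, sum_indicator] at h
  calc G.fracNu ≤ (A.card : ℝ) * 1 + (B.card : ℝ) * (1/2) := h
    _ = (A.card : ℝ) + (B.card : ℝ)/2 := by ring

lemma cover_pair (u v : V)
    (hcov : ∀ x y, G.Adj x y → x = u ∨ y = u ∨ x = v ∨ y = v) :
    G.fracNu ≤ 2 := by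
  have h := nu_le_cover2 (G := G) {u, v} ∅
    (fun x y hxy => by
      rcases hcov x y hxy with rfl | rfl | rfl | rfl
      · exact Or.inl (Or.inl (by simp))
      · exact Or.inl (Or.inr (by simp))
      · exact Or.inl (Or.inl (by simp))
      · exact Or.inl (Or.inr (by simp)))
  have hc : ({u, v} : Finset V).card ≤ 2 := Finset.card_insert_le _ _ |>.trans (by simp)
  have : (({u, v} : Finset V).card : ℝ) ≤ 2 := by exact_mod_cast hc
  simp only [Finset.card_empty] at h
  calc G.fracNu ≤ (({u,v} : Finset V).card : ℝ) + (0:ℕ)/2 := h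
    _ ≤ 2 := by push_cast; linarith
def No3M {V : Type*} (G : SimpleGraph V) : Prop :=
  ∀ ⦃a b c d x y : V⦄, G.Adj a b → G.Adj c d → G.Adj x y →
    a ≠ c → a ≠ d → a ≠ x → a ≠ y → b ≠ c → b ≠ d → b ≠ x → b ≠ y →
    c ≠ x → c ≠ y → d ≠ x → d ≠ y → False

def NoC5 {V : Type*} (G : SimpleGraph V) : Prop :=
  ∀ ⦃a b c d e : V⦄, G.Adj a b → G.Adj b c → G.Adj c d → G.Adj d e → G.Adj e a →
    a ≠ c → a ≠ d → b ≠ d → b ≠ e → c ≠ e → False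

def NoC3K2 {V : Type*} (G : SimpleGraph V) : Prop :=
  ∀ ⦃p q r s t : V⦄, G.Adj p q → G.Adj q r → G.Adj p r → G.Adj s t →
    p ≠ s → p ≠ t → q ≠ s → q ≠ t → r ≠ s → r ≠ t → False

lemma core (hM : No3M G) (hC5 : NoC5 G) (hK : NoC3K2 G) {a b c d x : V}
    (hab : G.Adj a b) (hcd : G.Adj c d) (hax : G.Adj a x)
    (hac : a ≠ c) (had : a ≠ d) (hbc : b ≠ c) (hbd : b ≠ d)
    (hxa : x ≠ a) (hxb : x ≠ b) (hxc : x ≠ c) (hxd : x ≠ d) : G.fracNu ≤ 2 := by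
  have hQ : ∀ u v, G.Adj u v → u = a ∨ u = b ∨ u = c ∨ u = d ∨ v = a ∨ v = b ∨ v = c ∨ v = d := by
    intro u v huv; by_contra hcon; push_neg at hcon
    obtain ⟨h1, h2, h3, h4, h5, h6, h7, h8⟩ := hcon
    exact hM hab hcd huv hac had h1.symm h5.symm hbc hbd h2.symm h6.symm h3.symm h7.symm h4.symm h8.symm
  have hNb : ∀ y, G.Adj b y → y = a ∨ y = c ∨ y = d := by
    intro y hby; by_contra hcon; push_neg at hcon
    obtain ⟨hya, hyc, hyd⟩ := hcon
    by_cases hyx : y = x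
    · subst hyx
      exact hK hab hby hax hcd hac had hbc hbd hxc hxd
    · exact hM hax hby hcd hab.ne hya.symm hac had hxb (Ne.symm hyx) hxc hxd hbc hbd hyc hyd
  have hNcd : ∀ y z, G.Adj c y → G.Adj d z →
      y ≠ a → y ≠ b → y ≠ c → y ≠ d → z ≠ a → z ≠ b → z ≠ c → z ≠ d → False := by
    intro y z hcy hdz hya hyb hyc hyd hza hzb hzc hzd
    by_cases hyz : y = z
    · subst hyz
      exact hK hcd hdz hcy hab hac.symm hbc.symm had.symm hbd.symm hya hyb
    · exact hM hab hcy hdz hac hya.symm had hza.symm hbc hyb.symm hbd hzb.symm hcd.ne hzc.symm hyd hyz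
  by_cases hNc : ∃ y, G.Adj c y ∧ y ≠ a ∧ y ≠ b ∧ y ≠ c ∧ y ≠ d
  · obtain ⟨y, hcy, hya, hyb, hyc, hyd⟩ := hNc
    have hNd : ∀ z, G.Adj d z → z = a ∨ z = b ∨ z = c := by
      intro z hdz; by_contra hcon; push_neg at hcon
      obtain ⟨hza, hzb, hzc⟩ := hcon
      exact hNcd y z hcy hdz hya hyb hyc hyd hza hzb hzc hdz.ne'
    have hnbd : ¬ G.Adj b d := by
      intro hbd'
      by_cases hyx : y = x
      · subst hyx
        exact hC5 hax.symm hab hbd' hcd.symm hcy hxb hxd had hac hbc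
      · exact hM hax hcy hbd' hac hya.symm hab.ne had hxc (Ne.symm hyx) hxb hxd hbc.symm hcd.ne hyb hyd
    apply cover_pair a c
    intro u v huv; by_contra hcon; push_neg at hcon
    obtain ⟨hua, hva, huc, hvc⟩ := hcon
    rcases hQ u v huv with h | h | h | h | h | h | h | h
    · exact hua h
    · subst h
      rcases hNb v huv with h' | h' | h'
      · exact hva h'
      · exact hvc h'
      · subst h'; exact hnbd huv
    · exact huc h
    · subst h
      rcases hNd v huv with h' | h' | h'
      · exact hva h'
      · subst h'; exact hnbd huv.symm
      · exact hvc h'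
    · exact hva h
    · subst h
      rcases hNb u huv.symm with h' | h' | h'
      · exact hua h'
      · exact huc h'
      · subst h'; exact hnbd huv.symm
    · exact hvc h
    · subst h
      rcases hNd u huv.symm with h' | h' | h'
      · exact hua h'
      · subst h'; exact hnbd huv
      · exact huc h'
  · push_neg at hNc
    have hNc' : ∀ y, G.Adj c y → y = a ∨ y = b ∨ y = d := by
      intro y hcy; by_contra hcon; push_neg at hcon
      obtain ⟨hya, hyb, hyd⟩ := hcon
      exact hyd (hNc y hcy hya hyb hcy.ne')
    by_cases hNd : ∃ z, G.Adj d z ∧ z ≠ a ∧ z ≠ b ∧ z ≠ c ∧ z ≠ d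
    · obtain ⟨z, hdz, hza, hzb, hzc, hzd⟩ := hNd
      have hnbc : ¬ G.Adj b c := by
        intro hbc'
        by_cases hzx : z = x
        · subst hzx
          exact hC5 hax.symm hab hbc' hcd hdz hxb hxc hac had hbd
        · exact hM hax hdz hbc' had hza.symm hab.ne hac hxd (Ne.symm hzx) hxb hxc hbd.symm hcd.ne' hzb hzc
      apply cover_pair a d
      intro u v huv; by_contra hcon; push_neg at hcon
      obtain ⟨hua, hva, hud, hvd⟩ := hcon
      rcases hQ u v huv with h | h | h | h | h | h | h | h
      · exact hua h
      · subst h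
        rcases hNb v huv with h' | h' | h'
        · exact hva h'
        · subst h'; exact hnbc huv
        · exact hvd h'
      · subst h
        rcases hNc' v huv with h' | h' | h'
        · exact hva h'
        · subst h'; exact hnbc huv.symm
        · exact hvd h'
      · exact hud h
      · exact hva h
      · subst h
        rcases hNb u huv.symm with h' | h' | h'
        · exact hua h'
        · subst h'; exact hnbc huv.symm
        · exact hud h'
      · subst h
        rcases hNc' u huv.symm with h' | h' | h'
        · exact hua h'
        · subst h'; exact hnbc huv
        · exact hud h'
      · exact hvd h
    · push_neg at hNd
      have hNd' : ∀ z, G.Adj d z → z = a ∨ z = b ∨ z = c := by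
        intro z hdz; by_contra hcon; push_neg at hcon
        obtain ⟨hza, hzb, hzc⟩ := hcon
        exact hdz.ne' (hNd z hdz hza hzb hzc)
      by_cases hbc' : G.Adj b c
      · have hnbd : ¬ G.Adj b d := by
          intro hbd'
          exact hK hbc' hcd hbd' hax hab.ne' hxb.symm hac.symm hxc.symm had.symm hxd.symm
        apply cover_pair a c
        intro u v huv; by_contra hcon; push_neg at hcon
        obtain ⟨hua, hva, huc, hvc⟩ := hcon
        rcases hQ u v huv with h | h | h | h | h | h | h | h
        · exact hua h
        · subst h
          rcases hNb v huv with h' | h' | h'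
          · exact hva h'
          · exact hvc h'
          · subst h'; exact hnbd huv
        · exact huc h
        · subst h
          rcases hNd' v huv with h' | h' | h'
          · exact hva h'
          · subst h'; exact hnbd huv.symm
          · exact hvc h'
        · exact hva h
        · subst h
          rcases hNb u huv.symm with h' | h' | h'
          · exact hua h'
          · exact huc h'
          · subst h'; exact hnbd huv.symm
        · exact hvc h
        · subst h
          rcases hNd' u huv.symm with h' | h' | h'
          · exact hua h'
          · subst h'; exact hnbd huv
          · exact huc h'
      · apply cover_pair a d
        intro u v huv; by_contra hcon; push_neg at hcon
        obtain ⟨hua, hva, hud, hvd⟩ := hcon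
        rcases hQ u v huv with h | h | h | h | h | h | h | h
        · exact hua h
        · subst h
          rcases hNb v huv with h' | h' | h'
          · exact hva h'
          · subst h'; exact hbc' huv
          · exact hvd h'
        · subst h
          rcases hNc' v huv with h' | h' | h'
          · exact hva h'
          · subst h'; exact hbc' huv.symm
          · exact hvd h'
        · exact hud h
        · exact hva h
        · subst h
          rcases hNb u huv.symm with h' | h' | h'
          · exact hua h'
          · subst h'; exact hbc' huv.symm
          · exact hud h'
        · subst h
          rcases hNc' u huv.symm with h' | h' | h'
          · exact hua h'
          · subst h'; exact hbc' huv
          · exact hud h'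
        · exact hvd h
lemma main_cover (hM : No3M G) (hC5 : NoC5 G) (hK : NoC3K2 G) : G.fracNu ≤ 2 := by
  by_cases h2e : ∃ p q u v : V, G.Adj p q ∧ G.Adj u v ∧ p ≠ u ∧ p ≠ v ∧ q ≠ u ∧ q ≠ v
  · obtain ⟨p, q, u, v, hpq, huv, h1, h2, h3, h4⟩ := h2e
    by_cases hIn : ∀ z w, G.Adj z w → z = p ∨ z = q ∨ z = u ∨ z = v
    · have hcov := nu_le_cover2 (G := G) ∅ {p, q, u, v}
        (fun z w hzw => Or.inr ⟨by
            rcases hIn z w hzw with rfl | rfl | rfl | rfl <;> simp, by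
            rcases hIn w z hzw.symm with rfl | rfl | rfl | rfl <;> simp⟩)
      have hcard : ({p, q, u, v} : Finset V).card ≤ 4 := by
        apply (Finset.card_insert_le _ _).trans
        apply Nat.succ_le_succ
        apply (Finset.card_insert_le _ _).trans
        apply Nat.succ_le_succ
        apply (Finset.card_insert_le _ _).trans
        simp
      have : (({p, q, u, v} : Finset V).card : ℝ) ≤ 4 := by exact_mod_cast hcard
      simp only [Finset.card_empty] at hcov
      calc G.fracNu ≤ (0:ℕ) + (({p, q, u, v} : Finset V).card : ℝ)/2 := hcov
        _ ≤ 2 := by push_cast; linarith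
    · push_neg at hIn
      obtain ⟨z, w, hzw, hzp, hzq, hzu, hzv⟩ := hIn
      have hw : w = p ∨ w = q ∨ w = u ∨ w = v := by
        by_contra hcon; push_neg at hcon
        obtain ⟨hwp, hwq, hwu, hwv⟩ := hcon
        exact hM hpq huv hzw h1 h2 hzp.symm hwp.symm h3 h4 hzq.symm hwq.symm hzu.symm hwu.symm hzv.symm hwv.symm
      rcases hw with rfl | rfl | rfl | rfl
      · exact core hM hC5 hK hpq huv hzw.symm h1 h2 h3 h4 hzp hzq hzu hzv
      · exact core hM hC5 hK hpq.symm huv hzw.symm h3 h4 h1 h2 hzq hzp hzu hzv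
      · exact core hM hC5 hK huv hpq hzw.symm h1.symm h3.symm h2.symm h4.symm hzu hzv hzp hzq
      · exact core hM hC5 hK huv.symm hpq hzw.symm h2.symm h4.symm h1.symm h3.symm hzv hzu hzp hzq
  · by_cases hE : ∃ p q, G.Adj p q
    · obtain ⟨p, q, hpq⟩ := hE
      apply cover_pair p q
      intro x y hxy; by_contra hcon; push_neg at hcon
      obtain ⟨h1, h2, h3, h4⟩ := hcon
      exact h2e ⟨p, q, x, y, hpq, hxy, h1.symm, h2.symm, h3.symm, h4.symm⟩
    · push_neg at hE
      have hcov := nu_le_cover2 (G := G) ∅ ∅ (fun x y hxy => absurd hxy (hE x y))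
      simp only [Finset.card_empty] at hcov
      calc G.fracNu ≤ ((0:ℕ) : ℝ) + ((0:ℕ) : ℝ)/2 := hcov
        _ ≤ 2 := by norm_num
def No2T {V : Type*} (G : SimpleGraph V) : Prop :=
  ∀ ⦃a b c x y z : V⦄, G.Adj a b → G.Adj b c → G.Adj a c →
    G.Adj x y → G.Adj y z → G.Adj x z →
    a ≠ x → a ≠ y → a ≠ z → b ≠ x → b ≠ y → b ≠ z → c ≠ x → c ≠ y → c ≠ z → False

lemma caseB2 (hM : No3M G) (h2T : No2T G) {p q r s t x0 : V}
    (e1 : G.Adj p q) (e2 : G.Adj q r) (e3 : G.Adj p r) (e4 : G.Adj s t) (e5 : G.Adj s x0)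
    (hps : p ≠ s) (hpt : p ≠ t) (hqs : q ≠ s) (hqt : q ≠ t) (hrs : r ≠ s) (hrt : r ≠ t)
    (hxp : x0 ≠ p) (hxq : x0 ≠ q) (hxr : x0 ≠ r) (hxs : x0 ≠ s) (hxt : x0 ≠ t) :
    ∃ u p' q' r' : V, ([u, p', q', r'] : List V).Nodup ∧
      (∀ x y : V, G.Adj x y →
        (x ∈ ({u, p', q', r'} : Set V) ∧ y ∈ ({u, p', q', r'} : Set V)) ∨ x = u ∨ y = u) ∧
      ∃ a b c d e : V, ([a, b, c, d, e] : List V).Nodup ∧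
        G.Adj a b ∧ G.Adj b c ∧ G.Adj a c ∧ G.Adj d e := by
  have hbad : ∀ z w, G.Adj z w → z ≠ s → w ≠ s → w ≠ p → w ≠ q → w ≠ r → False := by
    intro z w hzw hzs hws hwp hwq hwr
    by_cases hzp : z = p
    · subst hzp
      by_cases hwx : w = x0
      · subst hwx
        exact hM hzw e2 e4 e1.ne e3.ne hps hpt hxq hxr hxs hxt hqs hqt hrs hrt
      · exact hM hzw e2 e5 e1.ne e3.ne hps (Ne.symm hxp) hwq hwr hws (fun h => hwx h) hqs (Ne.symm hxq) hrs (Ne.symm hxr)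
    by_cases hzq : z = q
    · subst hzq
      by_cases hwx : w = x0
      · subst hwx
        exact hM hzw e3 e4 e1.ne' e2.ne hqs hqt hxp hxr hxs hxt hps hpt hrs hrt
      · exact hM hzw e3 e5 e1.ne' e2.ne hqs (Ne.symm hxq) hwp hwr hws (fun h => hwx h) hps (Ne.symm hxp) hrs (Ne.symm hxr)
    by_cases hzr : z = r
    · subst hzr
      by_cases hwx : w = x0
      · subst hwx
        exact hM hzw e1 e4 e3.ne' e2.ne' hrs hrt hxp hxq hxs hxt hps hpt hqs hqt
      · exact hM hzw e1 e5 e3.ne' e2.ne' hrs (Ne.symm hxr) hwp hwq hws (fun h => hwx h) hps (Ne.symm hxp) hqs (Ne.symm hxq)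
    by_cases hzt : z = t
    · subst hzt
      by_cases hwx : w = x0
      · subst hwx
        exact h2T e1 e2 e3 e4 hzw e5 hps hpt (Ne.symm hxp) hqs hqt (Ne.symm hxq) hrs hrt (Ne.symm hxr)
      · exact hM hzw e1 e5 (Ne.symm hpt) (Ne.symm hqt) e4.ne' (Ne.symm hxt) hwp hwq hws (fun h => hwx h) hps (Ne.symm hxp) hqs (Ne.symm hxq)
    · by_cases hwt : w = t
      · subst hwt
        by_cases hzx : z = x0
        · subst hzx
          exact h2T e1 e2 e3 e4 hzw.symm e5 hps hpt (Ne.symm hxp) hqs hqt (Ne.symm hxq) hrs hrt (Ne.symm hxr)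
        · exact hM hzw e1 e5 hzp hzq hzs (fun h => hzx h) hpt.symm hqt.symm e4.ne' (Ne.symm hxt) hps (Ne.symm hxp) hqs (Ne.symm hxq)
      · exact hM hzw e1 e4 hzp hzq hzs (fun h => hzt h) hwp hwq hws (fun h => hwt h) hps hpt hqs hqt
  refine ⟨s, p, q, r, ?_, ?_, p, q, r, s, t, ?_, e1, e2, e3, e4⟩
  · simp [hps.symm, hqs.symm, hrs.symm, e1.ne, e3.ne, e2.ne]
  · intro z w hzw
    by_contra hcon
    push_neg at hcon
    obtain ⟨hns, hzs, hws⟩ := hcon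
    by_cases hzin : z ∈ ({s, p, q, r} : Set V)
    · have hwn : w ∉ ({s, p, q, r} : Set V) := fun hw => hns hzin hw
      simp only [Set.mem_insert_iff, Set.mem_singleton_iff, not_or] at hwn
      exact hbad z w hzw hzs hws hwn.2.1 hwn.2.2.1 hwn.2.2.2
    · simp only [Set.mem_insert_iff, Set.mem_singleton_iff, not_or] at hzin
      exact hbad w z hzw.symm hws hzs hzin.2.1 hzin.2.2.1 hzin.2.2.2
  · simp [e1.ne, e3.ne, hps, hpt, e2.ne, hqs, hqt, hrs, hrt, e4.ne]
theorem stmt_8_aux (G : SimpleGraph V) :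
    G.fracNu = 5/2 ↔
      ((∃ A : Finset V, A.card = 5 ∧ (∀ x y : V, G.Adj x y → x ∈ A ∧ y ∈ A) ∧
        ∃ a b c d e : V, ([a, b, c, d, e] : List V).Nodup ∧
          G.Adj a b ∧ G.Adj b c ∧ G.Adj c d ∧ G.Adj d e ∧ G.Adj e a) ∨
      (∃ A : Finset V, A.card = 5 ∧ (∀ x y : V, G.Adj x y → x ∈ A ∧ y ∈ A) ∧
        ∃ a b c d e : V, ([a, b, c, d, e] : List V).Nodup ∧
          G.Adj a b ∧ G.Adj b c ∧ G.Adj a c ∧ G.Adj d e) ∨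
      (∃ u p q r : V, ([u, p, q, r] : List V).Nodup ∧
        (∀ x y : V, G.Adj x y →
          (x ∈ ({u, p, q, r} : Set V) ∧ y ∈ ({u, p, q, r} : Set V)) ∨ x = u ∨ y = u) ∧
        ∃ a b c d e : V, ([a, b, c, d, e] : List V).Nodup ∧
          G.Adj a b ∧ G.Adj b c ∧ G.Adj a c ∧ G.Adj d e)) := by
  constructor
  · intro h52
    have hM : No3M G := by
      intro a b c d x y f1 f2 f3 h1 h2 h3 h4 h5 h6 h7 h8 h9 h10 h11 h12
      exact no3M_aux h52 f1 f2 f3 f1.ne h1 h2 h3 h4 h5 h6 h7 h8 f2.ne h9 h10 h11 h12 f3.ne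
    have h2T : No2T G := by
      intro a b c x y z f1 f2 f3 f4 f5 f6 h1 h2 h3 h4 h5 h6 h7 h8 h9
      exact no2T_aux h52 f1 f2 f3 f4 f5 f6 f1.ne f3.ne f2.ne h1 h2 h3 h4 h5 h6 h7 h8 h9 f4.ne f6.ne f5.ne
    by_cases hC5e : ∃ a b c d e : V, ([a, b, c, d, e] : List V).Nodup ∧
        G.Adj a b ∧ G.Adj b c ∧ G.Adj c d ∧ G.Adj d e ∧ G.Adj e a
    · left
      obtain ⟨a, b, c, d, e, hnd, f1, f2, f3, f4, f5⟩ := hC5e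
      have hnd' := hnd
      simp only [List.nodup_cons, List.mem_cons, List.not_mem_nil, or_false, not_or,
        List.nodup_nil, and_true] at hnd
      obtain ⟨⟨hab, hac, had, hae⟩, ⟨hbc, hbd, hbe⟩, ⟨hcd, hce⟩, hde, -⟩ := hnd
      have hout : ∀ x y, G.Adj x y → x ∉ ({a, b, c, d, e} : Finset V) → False := by
        intro x y hxy hxA
        simp only [Finset.mem_insert, Finset.mem_singleton, not_or] at hxA
        obtain ⟨hxa, hxb, hxc, hxd, hxe⟩ := hxA
        by_cases hyA : y ∈ ({a, b, c, d, e} : Finset V)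
        · simp only [Finset.mem_insert, Finset.mem_singleton] at hyA
          rcases hyA with rfl | rfl | rfl | rfl | rfl
          · exact hM hxy f2 f4 hxb hxc hxd hxe hab hac had hae hbd hbe hcd hce
          · exact hM hxy f3 f5 hxc hxd hxe hxa hbc hbd hbe (Ne.symm hab) hce (Ne.symm hac) hde (Ne.symm had)
          · exact hM hxy f4 f1 hxd hxe hxa hxb hcd hce (Ne.symm hac) (Ne.symm hbc) (Ne.symm had) (Ne.symm hbd) (Ne.symm hae) (Ne.symm hbe)
          · exact hM hxy f5 f2 hxe hxa hxb hxc hde (Ne.symm had) (Ne.symm hbd) (Ne.symm hcd) (Ne.symm hbe) (Ne.symm hce) hab hac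
          · exact hM hxy f1 f3 hxa hxb hxc hxd (Ne.symm hae) (Ne.symm hbe) (Ne.symm hce) (Ne.symm hde) hac had hbc hbd
        · simp only [Finset.mem_insert, Finset.mem_singleton, not_or] at hyA
          obtain ⟨hya, hyb, hyc, hyd, hye⟩ := hyA
          exact hM hxy f1 f3 hxa hxb hxc hxd hya hyb hyc hyd hac had hbc hbd
      refine ⟨{a, b, c, d, e}, ?_, ?_, a, b, c, d, e, hnd', f1, f2, f3, f4, f5⟩
      · rw [Finset.card_insert_of_notMem (by simp [hab, hac, had, hae]),
          Finset.card_insert_of_notMem (by simp [hbc, hbd, hbe]),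
          Finset.card_insert_of_notMem (by simp [hcd, hce]),
          Finset.card_insert_of_notMem (by simp [hde]), Finset.card_singleton]
      · intro x y hxy
        constructor
        · by_contra hx; exact hout x y hxy hx
        · by_contra hy; exact hout y x hxy.symm hy
    · by_cases hKe : ∃ p q r s t : V, ([p, q, r, s, t] : List V).Nodup ∧
          G.Adj p q ∧ G.Adj q r ∧ G.Adj p r ∧ G.Adj s t
      · obtain ⟨p, q, r, s, t, hnd, f1, f2, f3, f4⟩ := hKe
        have hnd' := hnd
        simp only [List.nodup_cons, List.mem_cons, List.not_mem_nil, or_false, not_or,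
          List.nodup_nil, and_true] at hnd
        obtain ⟨⟨hpq, hpr, hps, hpt⟩, ⟨hqr, hqs, hqt⟩, ⟨hrs, hrt⟩, hst, -⟩ := hnd
        by_cases hIn : ∀ x y, G.Adj x y → x = p ∨ x = q ∨ x = r ∨ x = s ∨ x = t
        · right; left
          refine ⟨{p, q, r, s, t}, ?_, ?_, p, q, r, s, t, hnd', f1, f2, f3, f4⟩
          · rw [Finset.card_insert_of_notMem (by simp [hpq, hpr, hps, hpt]),
              Finset.card_insert_of_notMem (by simp [hqr, hqs, hqt]),
              Finset.card_insert_of_notMem (by simp [hrs, hrt]),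
              Finset.card_insert_of_notMem (by simp [hst]), Finset.card_singleton]
          · intro x y hxy
            constructor
            · rcases hIn x y hxy with rfl | rfl | rfl | rfl | rfl <;> simp
            · rcases hIn y x hxy.symm with rfl | rfl | rfl | rfl | rfl <;> simp
        · push_neg at hIn
          obtain ⟨x0, y0, hxy, hxp, hxq, hxr, hxs, hxt⟩ := hIn
          have hy0 : y0 = p ∨ y0 = q ∨ y0 = r ∨ y0 = s ∨ y0 = t := by
            by_contra hcon; push_neg at hcon
            obtain ⟨hyp, hyq, hyr, hys, hyt⟩ := hcon
            exact hM hxy f1 f4 hxp hxq hxs hxt hyp hyq hys hyt hps hpt hqs hqt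
          right; right
          rcases hy0 with rfl | rfl | rfl | rfl | rfl
          · exact (hM hxy f2 f4 hxq hxr hxs hxt hpq hpr hps hpt hqs hqt hrs hrt).elim
          · exact (hM hxy f3 f4 hxp hxr hxs hxt (Ne.symm hpq) hqr hqs hqt hps hpt hrs hrt).elim
          · exact (hM hxy f1 f4 hxp hxq hxs hxt (Ne.symm hpr) (Ne.symm hqr) hrs hrt hps hpt hqs hqt).elim
          · exact caseB2 hM h2T f1 f2 f3 f4 hxy.symm hps hpt hqs hqt hrs hrt hxp hxq hxr hxs hxt
          · exact caseB2 hM h2T f1 f2 f3 f4.symm hxy.symm hpt hps hqt hqs hrt hrs hxp hxq hxr hxt hxs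
      · exfalso
        have hC5' : NoC5 G := by
          intro a b c d e f1 f2 f3 f4 f5 h1 h2 h3 h4 h5
          exact hC5e ⟨a, b, c, d, e,
            by simp [f1.ne, h1, h2, f5.ne', f2.ne, h3, h4, f3.ne, h5, f4.ne], f1, f2, f3, f4, f5⟩
        have hK' : NoC3K2 G := by
          intro p q r s t f1 f2 f3 f4 h1 h2 h3 h4 h5 h6
          exact hKe ⟨p, q, r, s, t,
            by simp [f1.ne, f3.ne, h1, h2, f2.ne, h3, h4, h5, h6, f4.ne], f1, f2, f3, f4⟩
        have := main_cover hM hC5' hK'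
        rw [h52] at this
        norm_num at this
  · rintro (⟨A, hA, hin, a, b, c, d, e, hnd, f1, f2, f3, f4, f5⟩ |
      ⟨A, hA, hin, a, b, c, d, e, hnd, f1, f2, f3, f4⟩ |
      ⟨u, p, q, r, hnd4, hcov, a, b, c, d, e, hnd, f1, f2, f3, f4⟩)
    · simp only [List.nodup_cons, List.mem_cons, List.not_mem_nil, or_false, not_or,
        List.nodup_nil, and_true] at hnd
      obtain ⟨⟨hab, hac, had, hae⟩, ⟨hbc, hbd, hbe⟩, ⟨hcd, hce⟩, hde, -⟩ := hnd
      have hup := nu_le_cover2 (G := G) ∅ A (fun x y hxy => Or.inr (hin x y hxy))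
      rw [hA] at hup
      simp only [Finset.card_empty] at hup
      have hlo := lb_C5 (G := G) f1 f2 f3 f4 f5 hab hac had hae hbc hbd hbe hcd hce hde
      have : G.fracNu ≤ 5/2 := by push_cast at hup; linarith
      linarith
    · simp only [List.nodup_cons, List.mem_cons, List.not_mem_nil, or_false, not_or,
        List.nodup_nil, and_true] at hnd
      obtain ⟨⟨hab, hac, had, hae⟩, ⟨hbc, hbd, hbe⟩, ⟨hcd, hce⟩, hde, -⟩ := hnd
      have hup := nu_le_cover2 (G := G) ∅ A (fun x y hxy => Or.inr (hin x y hxy))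
      rw [hA] at hup
      simp only [Finset.card_empty] at hup
      have hlo := lb_C3K2 (G := G) f1 f2 f3 f4 hab hac had hae hbc hbd hbe hcd hce hde
      have : G.fracNu ≤ 5/2 := by push_cast at hup; linarith
      linarith
    · simp only [List.nodup_cons, List.mem_cons, List.not_mem_nil, or_false, not_or,
        List.nodup_nil, and_true] at hnd hnd4
      obtain ⟨⟨hab, hac, had, hae⟩, ⟨hbc, hbd, hbe⟩, ⟨hcd, hce⟩, hde, -⟩ := hnd
      obtain ⟨⟨hup', huq, hur⟩, ⟨hpq, hpr⟩, hqr, -⟩ := hnd4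
      have hlo := lb_C3K2 (G := G) f1 f2 f3 f4 hab hac had hae hbc hbd hbe hcd hce hde
      have hup := nu_le_cover2 (G := G) {u} {p, q, r} (fun x y hxy => by
        rcases hcov x y hxy with ⟨hx, hy⟩ | rfl | rfl
        · by_cases hxu : x = u
          · exact Or.inl (Or.inl (by simp [hxu]))
          · by_cases hyu : y = u
            · exact Or.inl (Or.inr (by simp [hyu]))
            · simp only [Set.mem_insert_iff, Set.mem_singleton_iff] at hx hy
              refine Or.inr ⟨?_, ?_⟩
              · rcases hx with h | h | h | h
                · exact absurd h hxu
                · simp [h]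
                · simp [h]
                · simp [h]
              · rcases hy with h | h | h | h
                · exact absurd h hyu
                · simp [h]
                · simp [h]
                · simp [h]
        · exact Or.inl (Or.inl (by simp))
        · exact Or.inl (Or.inr (by simp)))
      have hc1 : ({u} : Finset V).card = 1 := Finset.card_singleton u
      have hc3 : ({p, q, r} : Finset V).card = 3 := by
        rw [Finset.card_insert_of_notMem (by simp [hpq, hpr]),
          Finset.card_insert_of_notMem (by simp [hqr]), Finset.card_singleton]
      rw [hc1, hc3] at hup
      have : G.fracNu ≤ 5/2 := by push_cast at hup; linarith
      linarith

end AuxProofs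

theorem stmt_8 {V : Type*} [Fintype V] (G : SimpleGraph V) :
    G.fracNu = 5/2 ↔
      ((∃ A : Finset V, A.card = 5 ∧ (∀ x y : V, G.Adj x y → x ∈ A ∧ y ∈ A) ∧
        ∃ a b c d e : V, ([a, b, c, d, e] : List V).Nodup ∧
          G.Adj a b ∧ G.Adj b c ∧ G.Adj c d ∧ G.Adj d e ∧ G.Adj e a) ∨
      (∃ A : Finset V, A.card = 5 ∧ (∀ x y : V, G.Adj x y → x ∈ A ∧ y ∈ A) ∧
        ∃ a b c d e : V, ([a, b, c, d, e] : List V).Nodup ∧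
          G.Adj a b ∧ G.Adj b c ∧ G.Adj a c ∧ G.Adj d e) ∨
      (∃ u p q r : V, ([u, p, q, r] : List V).Nodup ∧
        (∀ x y : V, G.Adj x y →
          (x ∈ ({u, p, q, r} : Set V) ∧ y ∈ ({u, p, q, r} : Set V)) ∨ x = u ∨ y = u) ∧
        ∃ a b c d e : V, ([a, b, c, d, e] : List V).Nodup ∧
          G.Adj a b ∧ G.Adj b c ∧ G.Adj a c ∧ G.Adj d e)) := by exact stmt_8_aux G
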